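/- arXiv:1604.07515 — 8 statements merged into one kernel-verified Lean document; each statement's English description precedes it below -/
import Mathlib

section
/- For every T ≥ 1, the total degree of all vertices pushed by the parallel PR-Nibble process with the optimized update rule over the first T iterations satisfies Σ_{i=1}^{T} Σ_{v ∈ A_i} d(v) ≤ 1/(α·ε). In particular, this bound is independent of T. -/
/-- **Parallel PR-Nibble (optimized update rule), work bound.**
Let `G` be a finite simple undirected graph in which every vertex has positive degree.
Fix `α ∈ (0,1)`, `ε > 0` and a seed vertex `x`. The parallel PR-Nibble process with the
optimized update rule defines residuals `r 1 = 𝟙_x`, active sets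
`A i = {v : r i v ≥ ε·d(v)}`, and
`r (i+1) w = (if w ∈ A i then 0 else r i w) + Σ_{v ∈ A i, {v,w} ∈ E} ((1-α)/(1+α))·r i v / d(v)`.
Then for every `T ≥ 1`, `Σ_{i=1}^{T} Σ_{v ∈ A i} d(v) ≤ 1/(α·ε)`. -/
theorem parallel_pr_nibble_optimized_work_bound
    {V : Type*} [Fintype V] [DecidableEq V] (G : SimpleGraph V) [DecidableRel G.Adj]
    (hd : ∀ v : V, 0 < G.degree v)
    (α ε : ℝ) (hα : α ∈ Set.Ioo (0 : ℝ) 1) (hε : 0 < ε)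
    (x : V)
    (r : ℕ → V → ℝ) (A : ℕ → Finset V)
    (hinit : ∀ v : V, r 1 v = if v = x then 1 else 0)
    (hA : ∀ i, 1 ≤ i → ∀ v : V, v ∈ A i ↔ ε * (G.degree v : ℝ) ≤ r i v)
    (hrec : ∀ i, 1 ≤ i → ∀ w : V,
      r (i + 1) w = (if w ∈ A i then 0 else r i w)
        + ∑ v ∈ A i, if G.Adj v w then
            ((1 - α) / (1 + α)) * r i v / (G.degree v : ℝ) else 0) :
    ∀ T : ℕ, 1 ≤ T →
      ∑ i ∈ Finset.Icc 1 T, ∑ v ∈ A i, (G.degree v : ℝ) ≤ 1 / (α * ε) := by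
  obtain ⟨hα0, hα1⟩ := hα
  have h1α : (0:ℝ) < 1 + α := by linarith
  -- nonnegativity of residuals
  have hnn : ∀ i, 1 ≤ i → ∀ v, 0 ≤ r i v := by
    intro i hi
    induction i, hi using Nat.le_induction with
    | base =>
      intro v; rw [hinit]; split <;> norm_num
    | succ n hn ih =>
      intro w
      rw [hrec n hn w]
      have h1 : (0:ℝ) ≤ if w ∈ A n then 0 else r n w := by
        split
        · exact le_refl 0
        · exact ih w
      have h2 : (0:ℝ) ≤ ∑ v ∈ A n, if G.Adj v w then
            ((1 - α) / (1 + α)) * r n v / (G.degree v : ℝ) else 0 := by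
        apply Finset.sum_nonneg
        intro v hv
        split
        · apply div_nonneg
          · apply mul_nonneg
            · apply div_nonneg <;> linarith
            · exact ih v
          · positivity
        · exact le_refl 0
      linarith
  -- mass identity
  have hmass : ∀ i, 1 ≤ i → ∑ w, r (i+1) w
      = ∑ w, r i w - (2*α/(1+α)) * ∑ v ∈ A i, r i v := by
    intro i hi
    have step : ∑ w, r (i+1) w
        = (∑ w, if w ∈ A i then 0 else r i w)
          + ∑ v ∈ A i, ((1-α)/(1+α)) * r i v := by
      rw [Finset.sum_congr rfl fun w _ => hrec i hi w, Finset.sum_add_distrib]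
      congr 1
      rw [Finset.sum_comm]
      apply Finset.sum_congr rfl
      intro v _
      rw [← Finset.sum_filter]
      have hfil : Finset.univ.filter (fun w => G.Adj v w) = G.neighborFinset v := by
        ext w; simp [SimpleGraph.mem_neighborFinset]
      rw [hfil, Finset.sum_const, SimpleGraph.card_neighborFinset_eq_degree,
        nsmul_eq_mul]
      have hdv : (G.degree v : ℝ) ≠ 0 := by
        exact_mod_cast (hd v).ne'
      field_simp
    have first : (∑ w, if w ∈ A i then 0 else r i w)
        = ∑ w, r i w - ∑ v ∈ A i, r i v := by
      have : ∀ w : V, (if w ∈ A i then 0 else r i w)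
          = r i w - (if w ∈ A i then r i w else 0) := by
        intro w; split <;> ring
      rw [Finset.sum_congr rfl fun w _ => this w, Finset.sum_sub_distrib]
      congr 1
      rw [Finset.sum_ite_mem, Finset.univ_inter]
    rw [step, first, ← Finset.mul_sum]
    have hc : (1-α)/(1+α) = 1 - 2*α/(1+α) := by field_simp; ring
    rw [hc]; ring
  intro T hT
  -- telescoped identity
  have htel : ∀ T, 1 ≤ T → ∑ w, r (T+1) w
      = 1 - (2*α/(1+α)) * ∑ i ∈ Finset.Icc 1 T, ∑ v ∈ A i, r i v := by
    intro T hT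
    induction T, hT using Nat.le_induction with
    | base =>
      rw [hmass 1 le_rfl]
      have : ∑ w, r 1 w = 1 := by
        rw [Finset.sum_congr rfl fun w _ => hinit w]
        simp
      rw [this]
      simp
    | succ n hn ih =>
      rw [hmass (n+1) (by omega), ih,
        Finset.sum_Icc_succ_top (by omega : 1 ≤ n+1)]
      ring
  have hST : (0:ℝ) ≤ ∑ w, r (T+1) w :=
    Finset.sum_nonneg fun w _ => hnn (T+1) (by omega) w
  rw [htel T hT] at hST
  -- pushed mass lower bound
  have hlow : ε * ∑ i ∈ Finset.Icc 1 T, ∑ v ∈ A i, (G.degree v : ℝ)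
      ≤ ∑ i ∈ Finset.Icc 1 T, ∑ v ∈ A i, r i v := by
    rw [Finset.mul_sum]
    apply Finset.sum_le_sum
    intro i hi
    rw [Finset.mul_sum]
    apply Finset.sum_le_sum
    intro v hv
    exact (hA i (Finset.mem_Icc.mp hi).1 v).mp hv
  set P := ∑ i ∈ Finset.Icc 1 T, ∑ v ∈ A i, r i v with hP
  set D := ∑ i ∈ Finset.Icc 1 T, ∑ v ∈ A i, (G.degree v : ℝ) with hD
  have hPb : P ≤ (1+α)/(2*α) := by
    rw [le_div_iff₀ (by positivity)]
    have h' : 2*α/(1+α)*P ≤ 1 := by linarith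
    rw [div_mul_eq_mul_div, div_le_one h1α] at h'
    linarith
  have h2 : (1+α)/(2*α) ≤ 1/α := by
    rw [div_le_div_iff₀ (by positivity) hα0]
    nlinarith
  have hεD : ε * D ≤ 1/α := le_trans hlow (le_trans hPb h2)
  rw [le_div_iff₀ (by positivity)]
  have h3 := (le_div_iff₀ hα0).mp hεD
  have heq : D*(α*ε) = ε*D*α := by ring
  linarith
end

section
/- For every T ≥ 1, the total degree of all vertices pushed by the parallel PR-Nibble process with the original update rule over the first T iterations satisfies Σ_{i=1}^{T} Σ_{v ∈ A_i} d(v) ≤ 1/(α·ε). In particular, this bound is independent of T. -/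
/-- **Parallel PR-Nibble (original update rule), work bound.**
Residuals: `r 1 = 𝟙_x`, `A i = {v : r i v ≥ ε·d(v)}`, and
`r (i+1) w = (if w ∈ A i then (1-α)·r i w/2 else r i w)
  + Σ_{v ∈ A i, {v,w} ∈ E} ((1-α)/2)·r i v / d(v)`.
Then for every `T ≥ 1`, `Σ_{i=1}^{T} Σ_{v ∈ A i} d(v) ≤ 1/(α·ε)`. -/
theorem parallel_pr_nibble_original_work_bound
    {V : Type*} [Fintype V] [DecidableEq V] (G : SimpleGraph V) [DecidableRel G.Adj]
    (hd : ∀ v : V, 0 < G.degree v)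
    (α ε : ℝ) (hα : α ∈ Set.Ioo (0 : ℝ) 1) (hε : 0 < ε)
    (x : V)
    (r : ℕ → V → ℝ) (A : ℕ → Finset V)
    (hinit : ∀ v : V, r 1 v = if v = x then 1 else 0)
    (hA : ∀ i, 1 ≤ i → ∀ v : V, v ∈ A i ↔ ε * (G.degree v : ℝ) ≤ r i v)
    (hrec : ∀ i, 1 ≤ i → ∀ w : V,
      r (i + 1) w = (if w ∈ A i then (1 - α) * r i w / 2 else r i w)
        + ∑ v ∈ A i, if G.Adj v w then
            ((1 - α) / 2) * r i v / (G.degree v : ℝ) else 0) :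
    ∀ T : ℕ, 1 ≤ T →
      ∑ i ∈ Finset.Icc 1 T, ∑ v ∈ A i, (G.degree v : ℝ) ≤ 1 / (α * ε) := by
  obtain ⟨hα0, hα1⟩ := hα
  -- nonnegativity of residuals
  have hnn : ∀ i, 1 ≤ i → ∀ v, 0 ≤ r i v := by
    intro i
    induction i with
    | zero => omega
    | succ n ih =>
      intro _ w
      rcases Nat.eq_zero_or_pos n with h1 | h1
      · subst h1
        rw [hinit]
        split <;> norm_num
      · have hn : 1 ≤ n := h1
        have hr := ih hn
        rw [hrec n hn]
        apply add_nonneg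
        · split
          · have := hr w
            have h1α : (0:ℝ) ≤ 1 - α := by linarith
            positivity
          · exact hr w
        · apply Finset.sum_nonneg
          intro v _
          split
          · have := hr v
            have h1α : (0:ℝ) ≤ 1 - α := by linarith
            have hdv : (0:ℝ) ≤ (G.degree v : ℝ) := Nat.cast_nonneg _
            positivity
          · exact le_refl 0
  -- mass identity
  have hsum : ∀ i, 1 ≤ i → ∑ w, r (i+1) w = ∑ w, r i w - α * ∑ v ∈ A i, r i v := by
    intro i hi
    have h1 : ∑ w, (if w ∈ A i then (1-α) * r i w / 2 else r i w)
        = ∑ w, r i w - ∑ v ∈ A i, (1+α)/2 * r i v := by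
      have : ∀ w : V, (if w ∈ A i then (1-α) * r i w / 2 else r i w)
          = r i w - (if w ∈ A i then (1+α)/2 * r i w else 0) := by
        intro w; split <;> ring
      simp_rw [this, Finset.sum_sub_distrib]
      congr 1
      rw [Finset.sum_ite_mem, Finset.univ_inter]
    have h2 : ∑ w, ∑ v ∈ A i, (if G.Adj v w then ((1-α)/2) * r i v / (G.degree v : ℝ) else 0)
        = ∑ v ∈ A i, (1-α)/2 * r i v := by
      rw [Finset.sum_comm]
      apply Finset.sum_congr rfl
      intro v _
      have hdv : ((G.degree v : ℝ)) ≠ 0 := by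
        exact_mod_cast (hd v).ne'
      have : ∑ w : V, (if G.Adj v w then ((1-α)/2) * r i v / (G.degree v : ℝ) else 0)
          = (G.degree v : ℝ) * (((1-α)/2) * r i v / (G.degree v : ℝ)) := by
        rw [← Finset.sum_filter, Finset.sum_const, nsmul_eq_mul]
        congr 1
        rw [← SimpleGraph.neighborFinset_eq_filter]
        rfl
      rw [this]
      field_simp
    calc ∑ w, r (i+1) w
        = ∑ w, ((if w ∈ A i then (1-α) * r i w / 2 else r i w)
            + ∑ v ∈ A i, (if G.Adj v w then ((1-α)/2) * r i v / (G.degree v : ℝ) else 0)) := by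
          apply Finset.sum_congr rfl; intro w _; exact hrec i hi w
      _ = (∑ w, r i w - ∑ v ∈ A i, (1+α)/2 * r i v) + ∑ v ∈ A i, (1-α)/2 * r i v := by
          rw [Finset.sum_add_distrib, h1, h2]
      _ = ∑ w, r i w - α * ∑ v ∈ A i, r i v := by
          rw [Finset.mul_sum]
          have : ∑ v ∈ A i, (1+α)/2 * r i v - ∑ v ∈ A i, (1-α)/2 * r i v
              = ∑ v ∈ A i, α * r i v := by
            rw [← Finset.sum_sub_distrib]
            apply Finset.sum_congr rfl
            intro v _; ring
          linarith
  -- per-step bound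
  have hstep : ∀ i, 1 ≤ i → α * ε * ∑ v ∈ A i, (G.degree v : ℝ)
      ≤ ∑ w, r i w - ∑ w, r (i+1) w := by
    intro i hi
    rw [hsum i hi]
    have : ε * ∑ v ∈ A i, (G.degree v : ℝ) ≤ ∑ v ∈ A i, r i v := by
      rw [Finset.mul_sum]
      apply Finset.sum_le_sum
      intro v hv
      exact (hA i hi v).mp hv
    have := mul_le_mul_of_nonneg_left this hα0.le
    linarith [this]
  intro T hT
  -- telescoping
  have htel : ∑ i ∈ Finset.Icc 1 T, (∑ w, r i w - ∑ w, r (i+1) w)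
      = ∑ w, r 1 w - ∑ w, r (T+1) w := by
    have h := Finset.sum_range_sub (fun j => -(∑ w, r (j+1) w)) T
    rw [← Finset.Ico_add_one_right_eq_Icc, Finset.sum_Ico_eq_sum_range]
    have hT1 : T + 1 - 1 = T := by omega
    rw [hT1]
    have : ∀ i ∈ Finset.range T, ∑ w, r (1+i) w - ∑ w, r (1+i+1) w
        = (fun j => -(∑ w, r (j+1) w)) (i+1) - (fun j => -(∑ w, r (j+1) w)) i := by
      intro i _
      simp only [Nat.add_comm 1 i]
      ring
    rw [Finset.sum_congr rfl this, h]
    ring_nf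
  have hS1 : ∑ w, r 1 w = 1 := by
    simp_rw [hinit]
    simp
  have hST : 0 ≤ ∑ w, r (T+1) w :=
    Finset.sum_nonneg (fun w _ => hnn (T+1) (by omega) w)
  have hfinal : α * ε * ∑ i ∈ Finset.Icc 1 T, ∑ v ∈ A i, (G.degree v : ℝ) ≤ 1 := by
    rw [Finset.mul_sum]
    calc ∑ i ∈ Finset.Icc 1 T, α * ε * ∑ v ∈ A i, (G.degree v : ℝ)
        ≤ ∑ i ∈ Finset.Icc 1 T, (∑ w, r i w - ∑ w, r (i+1) w) := by
          apply Finset.sum_le_sum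
          intro i hi
          exact hstep i (Finset.mem_Icc.mp hi).1
      _ = ∑ w, r 1 w - ∑ w, r (T+1) w := htel
      _ ≤ 1 := by rw [hS1]; linarith
  rw [le_div_iff₀ (by positivity : (0:ℝ) < α * ε)]
  linarith [hfinal]
end

section
/- For every iteration i of the parallel PR-Nibble process with the optimized update rule, the total residual mass decreases by exactly the mass moved to the PageRank vector: Σ_{v∈V} r_i(v) − Σ_{v∈V} r_{i+1}(v) = (2α/(1+α))·Σ_{v ∈ A_i} r_i(v); consequently, Σ_{v∈V} r_i(v) − Σ_{v∈V} r_{i+1}(v) ≥ α·ε·Σ_{v ∈ A_i} d(v). -/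
/-- **Parallel PR-Nibble (optimized update rule), per-iteration mass decrease.**
For every iteration `i ≥ 1`,
`Σ_v r i v − Σ_v r (i+1) v = (2α/(1+α))·Σ_{v ∈ A i} r i v`, and consequently
`Σ_v r i v − Σ_v r (i+1) v ≥ α·ε·Σ_{v ∈ A i} d(v)`. -/
theorem parallel_pr_nibble_optimized_mass_decrease
    {V : Type*} [Fintype V] [DecidableEq V] (G : SimpleGraph V) [DecidableRel G.Adj]
    (hd : ∀ v : V, 0 < G.degree v)
    (α ε : ℝ) (hα : α ∈ Set.Ioo (0 : ℝ) 1) (hε : 0 < ε)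
    (x : V)
    (r : ℕ → V → ℝ) (A : ℕ → Finset V)
    (hinit : ∀ v : V, r 1 v = if v = x then 1 else 0)
    (hA : ∀ i, 1 ≤ i → ∀ v : V, v ∈ A i ↔ ε * (G.degree v : ℝ) ≤ r i v)
    (hrec : ∀ i, 1 ≤ i → ∀ w : V,
      r (i + 1) w = (if w ∈ A i then 0 else r i w)
        + ∑ v ∈ A i, if G.Adj v w then
            ((1 - α) / (1 + α)) * r i v / (G.degree v : ℝ) else 0) :
    ∀ i, 1 ≤ i →
      ((∑ v, r i v) - (∑ v, r (i + 1) v)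
          = (2 * α / (1 + α)) * ∑ v ∈ A i, r i v) ∧
      ((∑ v, r i v) - (∑ v, r (i + 1) v)
          ≥ α * ε * ∑ v ∈ A i, (G.degree v : ℝ)) := by
  obtain ⟨hα0, hα1⟩ := hα
  intro i hi
  have hdeg : ∀ v : V, (G.degree v : ℝ) ≠ 0 := fun v =>
    Nat.cast_ne_zero.mpr (hd v).ne'
  -- sum of new residuals
  have hsum2 : (∑ w, r (i + 1) w)
      = (∑ w, (if w ∈ A i then 0 else r i w))
        + ∑ v ∈ A i, ((1 - α) / (1 + α)) * r i v := by
    have := Finset.sum_congr rfl (fun w (_ : w ∈ Finset.univ) => hrec i hi w)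
    rw [this, Finset.sum_add_distrib]
    congr 1
    rw [Finset.sum_comm]
    refine Finset.sum_congr rfl (fun v hv => ?_)
    have : (∑ w, if G.Adj v w then ((1 - α) / (1 + α)) * r i v / (G.degree v : ℝ) else 0)
        = (G.degree v : ℝ) * (((1 - α) / (1 + α)) * r i v / (G.degree v : ℝ)) := by
      rw [Finset.sum_ite, Finset.sum_const, Finset.sum_const_zero, add_zero,
        ← SimpleGraph.neighborFinset_eq_filter, nsmul_eq_mul, SimpleGraph.card_neighborFinset_eq_degree]
    rw [this, mul_div_assoc', mul_comm, mul_div_assoc, div_self (hdeg v), mul_one]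
  have hsplit : (∑ w, (if w ∈ A i then 0 else r i w))
      = (∑ w, r i w) - ∑ v ∈ A i, r i v := by
    rw [eq_sub_iff_add_eq, ← Finset.univ_inter (A i), ← Finset.sum_ite_mem,
      ← Finset.sum_add_distrib]
    refine Finset.sum_congr rfl (fun w _ => ?_)
    by_cases hw : w ∈ A i <;> simp [hw]
  have h1α : (1 : ℝ) + α ≠ 0 := by linarith
  have heq : (∑ v, r i v) - (∑ v, r (i + 1) v)
      = (2 * α / (1 + α)) * ∑ v ∈ A i, r i v := by
    rw [hsum2, hsplit, ← Finset.mul_sum]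
    field_simp
    ring
  refine ⟨heq, ?_⟩
  rw [heq]
  have hdsum : (0 : ℝ) ≤ ∑ v ∈ A i, (G.degree v : ℝ) :=
    Finset.sum_nonneg fun v _ => Nat.cast_nonneg _
  have hrsum : ε * (∑ v ∈ A i, (G.degree v : ℝ)) ≤ ∑ v ∈ A i, r i v := by
    rw [Finset.mul_sum]
    exact Finset.sum_le_sum fun v hv => (hA i hi v).mp hv
  have hc : α ≤ 2 * α / (1 + α) := by
    rw [le_div_iff₀ (by linarith)]
    nlinarith
  calc α * ε * ∑ v ∈ A i, (G.degree v : ℝ)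
      ≤ α * (∑ v ∈ A i, r i v) := by
        rw [mul_assoc]; exact mul_le_mul_of_nonneg_left hrsum hα0.le
    _ ≤ (2 * α / (1 + α)) * ∑ v ∈ A i, r i v := by
        refine mul_le_mul_of_nonneg_right hc ?_
        calc (0:ℝ) ≤ ε * ∑ v ∈ A i, (G.degree v : ℝ) :=
              mul_nonneg hε.le hdsum
          _ ≤ _ := hrsum
end

section
/- For every iteration i of the parallel PR-Nibble process with the original update rule, the total residual mass decreases by exactly Σ_{v∈V} r_i(v) − Σ_{v∈V} r_{i+1}(v) = α·Σ_{v ∈ A_i} r_i(v); consequently, Σ_{v∈V} r_i(v) − Σ_{v∈V} r_{i+1}(v) ≥ α·ε·Σ_{v ∈ A_i} d(v). -/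
/-- **Parallel PR-Nibble (original update rule), per-iteration mass decrease.**
For every iteration `i ≥ 1`,
`Σ_v r i v − Σ_v r (i+1) v = α·Σ_{v ∈ A i} r i v`, and consequently
`Σ_v r i v − Σ_v r (i+1) v ≥ α·ε·Σ_{v ∈ A i} d(v)`. -/
theorem parallel_pr_nibble_original_mass_decrease
    {V : Type*} [Fintype V] [DecidableEq V] (G : SimpleGraph V) [DecidableRel G.Adj]
    (hd : ∀ v : V, 0 < G.degree v)
    (α ε : ℝ) (hα : α ∈ Set.Ioo (0 : ℝ) 1) (hε : 0 < ε)
    (x : V)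
    (r : ℕ → V → ℝ) (A : ℕ → Finset V)
    (hinit : ∀ v : V, r 1 v = if v = x then 1 else 0)
    (hA : ∀ i, 1 ≤ i → ∀ v : V, v ∈ A i ↔ ε * (G.degree v : ℝ) ≤ r i v)
    (hrec : ∀ i, 1 ≤ i → ∀ w : V,
      r (i + 1) w = (if w ∈ A i then (1 - α) * r i w / 2 else r i w)
        + ∑ v ∈ A i, if G.Adj v w then
            ((1 - α) / 2) * r i v / (G.degree v : ℝ) else 0) :
    ∀ i, 1 ≤ i →
      ((∑ v, r i v) - (∑ v, r (i + 1) v) = α * ∑ v ∈ A i, r i v) ∧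
      ((∑ v, r i v) - (∑ v, r (i + 1) v)
          ≥ α * ε * ∑ v ∈ A i, (G.degree v : ℝ)) := by
  intro i hi
  obtain ⟨hα0, hα1⟩ := hα
  have h2 : ∑ w, ∑ v ∈ A i, (if G.Adj v w then ((1 - α) / 2) * r i v / (G.degree v : ℝ) else 0)
      = ((1 - α) / 2) * ∑ v ∈ A i, r i v := by
    rw [Finset.sum_comm, Finset.mul_sum]
    refine Finset.sum_congr rfl fun v _ => ?_
    have hdv : (G.degree v : ℝ) ≠ 0 := by
      exact_mod_cast (hd v).ne'
    rw [← Finset.sum_filter, Finset.sum_const]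
    have : (Finset.univ.filter (fun w => G.Adj v w)).card = G.degree v := by
      rw [← SimpleGraph.card_neighborFinset_eq_degree]
      congr 1
      ext w
      simp [SimpleGraph.mem_neighborFinset]
    rw [this, nsmul_eq_mul]
    field_simp
  have h1 : ∑ w, (if w ∈ A i then (1 - α) * r i w / 2 else r i w)
      = (∑ w, r i w) - ((1 + α) / 2) * ∑ v ∈ A i, r i v := by
    have : ∀ w : V, (if w ∈ A i then (1 - α) * r i w / 2 else r i w)
        = r i w - (if w ∈ A i then ((1 + α) / 2) * r i w else 0) := by
      intro w; split <;> ring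
    simp only [this]
    rw [Finset.sum_sub_distrib, Finset.sum_ite_mem, Finset.univ_inter, Finset.mul_sum]
  have key : ∑ v, r (i + 1) v = (∑ v, r i v) - α * ∑ v ∈ A i, r i v := by
    calc ∑ v, r (i + 1) v
        = ∑ w, ((if w ∈ A i then (1 - α) * r i w / 2 else r i w)
            + ∑ v ∈ A i, (if G.Adj v w then ((1 - α) / 2) * r i v / (G.degree v : ℝ) else 0)) :=
          Finset.sum_congr rfl fun w _ => hrec i hi w
      _ = _ := by rw [Finset.sum_add_distrib, h1, h2]; ring
  have heq : (∑ v, r i v) - (∑ v, r (i + 1) v) = α * ∑ v ∈ A i, r i v := by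
    rw [key]; ring
  refine ⟨heq, ?_⟩
  rw [heq, ge_iff_le, mul_assoc]
  refine mul_le_mul_of_nonneg_left ?_ hα0.le
  rw [Finset.mul_sum]
  exact Finset.sum_le_sum fun v hv => (hA i hi v).mp hv
end

section
/- In the parallel PR-Nibble process with the optimized update rule, for every i ≥ 1 the residual vector is entrywise nonnegative (r_i(v) ≥ 0 for all v ∈ V) and its total mass is nonincreasing and bounded by 1: Σ_{v∈V} r_{i+1}(v) ≤ Σ_{v∈V} r_i(v) ≤ 1. -/
/-- **Parallel PR-Nibble (optimized update rule): residuals are nonnegative and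
total residual mass is nonincreasing and bounded by 1.**
For every `i ≥ 1`: `r i v ≥ 0` for all `v`, and
`Σ_v r (i+1) v ≤ Σ_v r i v ≤ 1`. -/
theorem parallel_pr_nibble_optimized_residual_nonneg_mass_bounded
    {V : Type*} [Fintype V] [DecidableEq V] (G : SimpleGraph V) [DecidableRel G.Adj]
    (hd : ∀ v : V, 0 < G.degree v)
    (α ε : ℝ) (hα : α ∈ Set.Ioo (0 : ℝ) 1) (hε : 0 < ε)
    (x : V)
    (r : ℕ → V → ℝ) (A : ℕ → Finset V)
    (hinit : ∀ v : V, r 1 v = if v = x then 1 else 0)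
    (hA : ∀ i, 1 ≤ i → ∀ v : V, v ∈ A i ↔ ε * (G.degree v : ℝ) ≤ r i v)
    (hrec : ∀ i, 1 ≤ i → ∀ w : V,
      r (i + 1) w = (if w ∈ A i then 0 else r i w)
        + ∑ v ∈ A i, if G.Adj v w then
            ((1 - α) / (1 + α)) * r i v / (G.degree v : ℝ) else 0) :
    ∀ i, 1 ≤ i →
      (∀ v : V, 0 ≤ r i v) ∧
      (∑ v, r (i + 1) v ≤ ∑ v, r i v) ∧
      (∑ v, r i v ≤ 1) := by
  obtain ⟨hα0, hα1⟩ := hα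
  set c : ℝ := (1 - α) / (1 + α) with hc
  have hc0 : 0 ≤ c := div_nonneg (by linarith) (by linarith)
  have hc1 : c ≤ 1 := by
    rw [hc, div_le_one (by linarith)]; linarith
  -- nonnegativity for all i ≥ 1
  have hnn : ∀ i, 1 ≤ i → ∀ v, 0 ≤ r i v := by
    intro i hi
    induction i, hi using Nat.le_induction with
    | base => intro v; rw [hinit]; split <;> norm_num
    | succ n hn ih =>
      intro w
      rw [hrec n hn w]
      have h1 : (0:ℝ) ≤ if w ∈ A n then 0 else r n w := by
        split
        · exact le_rfl
        · exact ih w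
      refine add_nonneg h1 (Finset.sum_nonneg fun v _ => ?_)
      split
      · exact div_nonneg (mul_nonneg hc0 (ih v)) (Nat.cast_nonneg _)
      · exact le_rfl
  -- mass is nonincreasing
  have hstep : ∀ i, 1 ≤ i → ∑ v, r (i + 1) v ≤ ∑ v, r i v := by
    intro i hi
    have hnni := hnn i hi
    have hsum : ∑ w, r (i + 1) w
        = (∑ w, if w ∈ A i then 0 else r i w) + ∑ v ∈ A i, c * r i v := by
      have : ∀ w, r (i + 1) w = (if w ∈ A i then 0 else r i w)
          + ∑ v ∈ A i, if G.Adj v w then c * r i v / (G.degree v : ℝ) else 0 :=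
        hrec i hi
      rw [Finset.sum_congr rfl fun w _ => this w, Finset.sum_add_distrib]
      congr 1
      rw [Finset.sum_comm]
      refine Finset.sum_congr rfl fun v _ => ?_
      have hdv : ((G.degree v : ℝ)) ≠ 0 := by
        exact_mod_cast (hd v).ne'
      calc ∑ w, (if G.Adj v w then c * r i v / (G.degree v : ℝ) else 0)
          = ∑ w ∈ Finset.univ.filter (G.Adj v), c * r i v / (G.degree v : ℝ) := by
            rw [Finset.sum_filter]
        _ = (G.degree v : ℝ) * (c * r i v / (G.degree v : ℝ)) := by
            rw [Finset.sum_const, nsmul_eq_mul]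
            have hcard : (Finset.univ.filter (G.Adj v)).card = G.degree v := by
              rw [← SimpleGraph.card_neighborFinset_eq_degree]
              congr 1
              ext w
              simp [SimpleGraph.mem_neighborFinset]
            rw [hcard]
        _ = c * r i v := by field_simp
    rw [hsum]
    have h2 : ∑ v ∈ A i, c * r i v ≤ ∑ v ∈ A i, r i v := by
      refine Finset.sum_le_sum fun v _ => ?_
      nlinarith [hnni v]
    have h3 : (∑ w, if w ∈ A i then 0 else r i w) + ∑ v ∈ A i, r i v = ∑ v, r i v := by
      have : ∑ v ∈ A i, r i v = ∑ w, if w ∈ A i then r i w else 0 := by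
        rw [Finset.sum_ite_mem, Finset.univ_inter]
      rw [this, ← Finset.sum_add_distrib]
      refine Finset.sum_congr rfl fun w _ => ?_
      split <;> ring
    linarith
  -- mass bounded by 1
  have hmass : ∀ i, 1 ≤ i → ∑ v, r i v ≤ 1 := by
    intro i hi
    induction i, hi using Nat.le_induction with
    | base =>
      have : ∑ v, r 1 v = 1 := by
        rw [Finset.sum_congr rfl fun v _ => hinit v]
        simp
      linarith
    | succ n hn ih => exact le_trans (hstep n hn) ih
  intro i hi
  exact ⟨hnn i hi, hstep i hi, hmass i hi⟩
end

section
/- The parallel PR-Nibble process with the optimized update rule conserves total mass between the PageRank vector and the residual vector: for every i ≥ 1, Σ_{v∈V} p_i(v) + Σ_{v∈V} r_i(v) = 1, and both p_i and r_i are entrywise nonnegative. -/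
/-- **Parallel PR-Nibble (optimized update rule): conservation of mass.**
With PageRank vectors `p 1 = 0` and
`p (i+1) v = p i v + (if v ∈ A i then (2α/(1+α))·r i v else 0)`,
for every `i ≥ 1` we have `Σ_v p i v + Σ_v r i v = 1`, and both `p i` and
`r i` are entrywise nonnegative. -/
theorem parallel_pr_nibble_optimized_mass_conservation
    {V : Type*} [Fintype V] [DecidableEq V] (G : SimpleGraph V) [DecidableRel G.Adj]
    (hd : ∀ v : V, 0 < G.degree v)
    (α ε : ℝ) (hα : α ∈ Set.Ioo (0 : ℝ) 1) (hε : 0 < ε)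
    (x : V)
    (r p : ℕ → V → ℝ) (A : ℕ → Finset V)
    (hrinit : ∀ v : V, r 1 v = if v = x then 1 else 0)
    (hpinit : ∀ v : V, p 1 v = 0)
    (hA : ∀ i, 1 ≤ i → ∀ v : V, v ∈ A i ↔ ε * (G.degree v : ℝ) ≤ r i v)
    (hrrec : ∀ i, 1 ≤ i → ∀ w : V,
      r (i + 1) w = (if w ∈ A i then 0 else r i w)
        + ∑ v ∈ A i, if G.Adj v w then
            ((1 - α) / (1 + α)) * r i v / (G.degree v : ℝ) else 0)
    (hprec : ∀ i, 1 ≤ i → ∀ v : V,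
      p (i + 1) v = p i v + (if v ∈ A i then (2 * α / (1 + α)) * r i v else 0)) :
    ∀ i, 1 ≤ i →
      ((∑ v, p i v) + (∑ v, r i v) = 1) ∧
      (∀ v : V, 0 ≤ p i v) ∧
      (∀ v : V, 0 ≤ r i v) := by
  obtain ⟨hα0, hα1⟩ := hα
  have hα1' : (0:ℝ) < 1 + α := by linarith
  intro i hi
  induction i, hi using Nat.le_induction with
  | base =>
    refine ⟨by simp [hpinit, hrinit], fun v => by simp [hpinit], fun v => ?_⟩
    rw [hrinit]; split <;> norm_num
  | succ i hi ih =>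
    obtain ⟨hsum, hp, hr⟩ := ih
    have hdeg : ∀ v : V, ((G.degree v : ℝ)) ≠ 0 := fun v =>
      Nat.cast_ne_zero.mpr (hd v).ne'
    have key : ∑ w, ∑ v ∈ A i, (if G.Adj v w then
          ((1-α)/(1+α)) * r i v / (G.degree v : ℝ) else 0)
        = ∑ v ∈ A i, ((1-α)/(1+α)) * r i v := by
      rw [Finset.sum_comm]
      refine Finset.sum_congr rfl fun v hv => ?_
      rw [← Finset.sum_filter, Finset.sum_const,
        ← SimpleGraph.neighborFinset_eq_filter, SimpleGraph.card_neighborFinset_eq_degree,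
        nsmul_eq_mul, mul_comm, div_mul_cancel₀ _ (hdeg v)]
    have hS1 : ∀ (f : V → ℝ), ∑ w, (if w ∈ A i then f w else 0) = ∑ w ∈ A i, f w := by
      intro f
      rw [Finset.sum_ite_mem, Finset.univ_inter]
    have hrsum : ∑ w, r (i+1) w
        = (∑ w, r i w - ∑ v ∈ A i, r i v) + ∑ v ∈ A i, ((1-α)/(1+α)) * r i v := by
      calc ∑ w, r (i+1) w
          = ∑ w, ((if w ∈ A i then 0 else r i w)
            + ∑ v ∈ A i, (if G.Adj v w then
              ((1-α)/(1+α)) * r i v / (G.degree v : ℝ) else 0)) :=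
            Finset.sum_congr rfl fun w _ => hrrec i hi w
        _ = (∑ w, (if w ∈ A i then 0 else r i w)) + ∑ v ∈ A i, ((1-α)/(1+α)) * r i v := by
            rw [Finset.sum_add_distrib, key]
        _ = (∑ w, (r i w - if w ∈ A i then r i w else 0))
              + ∑ v ∈ A i, ((1-α)/(1+α)) * r i v := by
            congr 1
            refine Finset.sum_congr rfl fun w _ => ?_
            split <;> ring
        _ = (∑ w, r i w - ∑ v ∈ A i, r i v) + ∑ v ∈ A i, ((1-α)/(1+α)) * r i v := by
            rw [Finset.sum_sub_distrib, hS1]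
    have hpsum : ∑ w, p (i+1) w
        = ∑ w, p i w + ∑ v ∈ A i, (2*α/(1+α)) * r i v := by
      calc ∑ w, p (i+1) w
          = ∑ w, (p i w + (if w ∈ A i then (2*α/(1+α)) * r i w else 0)) :=
            Finset.sum_congr rfl fun w _ => hprec i hi w
        _ = ∑ w, p i w + ∑ v ∈ A i, (2*α/(1+α)) * r i v := by
            rw [Finset.sum_add_distrib, hS1]
    refine ⟨?_, ?_, ?_⟩
    · rw [hrsum, hpsum, ← Finset.mul_sum, ← Finset.mul_sum]
      have hc : (2*α/(1+α)) + ((1-α)/(1+α)) = 1 := by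
        field_simp; ring
      linear_combination hsum + (∑ v ∈ A i, r i v) * hc
    · intro v
      rw [hprec i hi v]
      have : (0:ℝ) ≤ if v ∈ A i then (2*α/(1+α)) * r i v else 0 := by
        split
        · exact mul_nonneg (div_nonneg (by linarith) hα1'.le) (hr v)
        · exact le_refl 0
      linarith [hp v, this]
    · intro w
      rw [hrrec i hi w]
      refine add_nonneg ?_ (Finset.sum_nonneg fun v hv => ?_)
      · split
        · exact le_refl 0
        · exact hr w
      · split
        · exact div_nonneg (mul_nonneg (div_nonneg (by linarith) hα1'.le) (hr v))
            (Nat.cast_nonneg _)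
        · exact le_refl 0
end

section
/- For any schedule of pushes in PR-Nibble with the optimized update rule — that is, any sequence of subsets B_i with B_i ⊆ {v ∈ V : r_i(v) ≥ ε·d(v)} — the total degree of all pushed vertices satisfies Σ_{i=1}^{T} Σ_{v ∈ B_i} d(v) ≤ 1/(α·ε) for every T ≥ 1. This covers both the sequential algorithm (each B_i a singleton) and the parallel algorithm (each B_i the full set of active vertices). -/
/-- **PR-Nibble (optimized update rule), work bound for arbitrary push schedules.**
Given any sequence of push sets `B i ⊆ {v : r i v ≥ ε·d(v)}`, with residuals
`r 1 = 𝟙_x` and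
`r (i+1) w = (if w ∈ B i then 0 else r i w) + Σ_{v ∈ B i, {v,w} ∈ E} ((1-α)/(1+α))·r i v / d(v)`,
the total degree of all pushed vertices satisfies
`Σ_{i=1}^{T} Σ_{v ∈ B i} d(v) ≤ 1/(α·ε)` for every `T ≥ 1`.
This covers both the sequential algorithm (singleton `B i`) and the parallel
algorithm (`B i` the full active set). -/
theorem pr_nibble_optimized_work_bound_any_schedule
    {V : Type*} [Fintype V] [DecidableEq V] (G : SimpleGraph V) [DecidableRel G.Adj]
    (hd : ∀ v : V, 0 < G.degree v)
    (α ε : ℝ) (hα : α ∈ Set.Ioo (0 : ℝ) 1) (hε : 0 < ε)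
    (x : V)
    (r : ℕ → V → ℝ) (B : ℕ → Finset V)
    (hinit : ∀ v : V, r 1 v = if v = x then 1 else 0)
    (hB : ∀ i, 1 ≤ i → ∀ v ∈ B i, ε * (G.degree v : ℝ) ≤ r i v)
    (hrec : ∀ i, 1 ≤ i → ∀ w : V,
      r (i + 1) w = (if w ∈ B i then 0 else r i w)
        + ∑ v ∈ B i, if G.Adj v w then
            ((1 - α) / (1 + α)) * r i v / (G.degree v : ℝ) else 0) :
    ∀ T : ℕ, 1 ≤ T →
      ∑ i ∈ Finset.Icc 1 T, ∑ v ∈ B i, (G.degree v : ℝ) ≤ 1 / (α * ε) := by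
  obtain ⟨hα0, hα1⟩ := hα
  have hc0 : (0:ℝ) ≤ (1 - α) / (1 + α) := div_nonneg (by linarith) (by linarith)
  -- nonnegativity of residuals
  have hnn : ∀ i, 1 ≤ i → ∀ v, 0 ≤ r i v := by
    intro i hi
    induction i, hi using Nat.le_induction with
    | base => intro v; rw [hinit]; split <;> norm_num
    | succ n hn ih =>
      intro w
      rw [hrec n hn w]
      have h1 : (0:ℝ) ≤ (if w ∈ B n then 0 else r n w) := by
        split
        · exact le_refl 0
        · exact ih w
      have h2 : (0:ℝ) ≤ ∑ v ∈ B n, if G.Adj v w then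
          ((1 - α) / (1 + α)) * r n v / (G.degree v : ℝ) else 0 := by
        apply Finset.sum_nonneg
        intro v hv
        split
        · exact div_nonneg (mul_nonneg hc0 (ih v)) (Nat.cast_nonneg _)
        · exact le_refl 0
      linarith
  -- key step identity
  have hstep : ∀ i, 1 ≤ i →
      ∑ w, r (i+1) w = ∑ w, r i w - (2*α/(1+α)) * ∑ v ∈ B i, r i v := by
    intro i hi
    have : ∑ w, r (i+1) w = (∑ w, (if w ∈ B i then (0:ℝ) else r i w))
        + ∑ w, ∑ v ∈ B i, (if G.Adj v w then
            ((1 - α) / (1 + α)) * r i v / (G.degree v : ℝ) else 0) := by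
      rw [← Finset.sum_add_distrib]
      exact Finset.sum_congr rfl fun w _ => hrec i hi w
    rw [this]
    have h1 : (∑ w, (if w ∈ B i then (0:ℝ) else r i w))
        = ∑ w, r i w - ∑ v ∈ B i, r i v := by
      have : ∀ w : V, (if w ∈ B i then (0:ℝ) else r i w)
          = r i w - (if w ∈ B i then r i w else 0) := by
        intro w; split <;> ring
      rw [Finset.sum_congr rfl fun w _ => this w, Finset.sum_sub_distrib,
        Finset.sum_ite_mem, Finset.univ_inter]
    have h2 : ∑ w, ∑ v ∈ B i, (if G.Adj v w then
            ((1 - α) / (1 + α)) * r i v / (G.degree v : ℝ) else 0)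
        = ((1 - α) / (1 + α)) * ∑ v ∈ B i, r i v := by
      rw [Finset.sum_comm, Finset.mul_sum]
      apply Finset.sum_congr rfl
      intro v hv
      rw [← Finset.sum_filter]
      have hfil : Finset.univ.filter (fun w => G.Adj v w) = G.neighborFinset v := by
        ext w; simp [SimpleGraph.mem_neighborFinset]
      rw [hfil, Finset.sum_const, SimpleGraph.card_neighborFinset_eq_degree]
      have hdv : ((G.degree v : ℝ)) ≠ 0 := by
        exact_mod_cast (hd v).ne'
      rw [nsmul_eq_mul]
      exact mul_div_cancel₀ _ hdv
    rw [h1, h2]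
    have hne : (1:ℝ) + α ≠ 0 := by linarith
    field_simp
    ring
  -- telescoping
  intro T hT
  set f : ℕ → ℝ := fun j => ∑ w, r (j+1) w with hf
  have htel : (2*α/(1+α)) * ∑ i ∈ Finset.Icc 1 T, ∑ v ∈ B i, r i v = f 0 - f T := by
    rw [← Finset.sum_range_sub' f T, Finset.mul_sum]
    rw [show Finset.Icc 1 T = Finset.map ⟨fun j => j+1, add_left_injective 1⟩ (Finset.range T) from by
      ext k
      simp only [Finset.mem_map, Finset.mem_range, Function.Embedding.coeFn_mk, Finset.mem_Icc]
      constructor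
      · rintro ⟨h1, h2⟩; exact ⟨k-1, by omega, by omega⟩
      · rintro ⟨j, hj, rfl⟩; omega]
    rw [Finset.sum_map]
    apply Finset.sum_congr rfl
    intro j hj
    simp only [Function.Embedding.coeFn_mk, hf]
    have := hstep (j+1) (by omega)
    linarith
  have hf0 : f 0 = 1 := by
    simp only [hf]
    rw [Finset.sum_congr rfl fun v _ => hinit v]
    simp
  have hfT : 0 ≤ f T := Finset.sum_nonneg fun w _ => hnn (T+1) (by omega) w
  -- relate degrees to residuals
  have hdeg : ε * ∑ i ∈ Finset.Icc 1 T, ∑ v ∈ B i, (G.degree v : ℝ)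
      ≤ ∑ i ∈ Finset.Icc 1 T, ∑ v ∈ B i, r i v := by
    rw [Finset.mul_sum]
    apply Finset.sum_le_sum
    intro i hi
    rw [Finset.mul_sum]
    apply Finset.sum_le_sum
    intro v hv
    exact hB i (Finset.mem_Icc.mp hi).1 v hv
  have hR : (2*α/(1+α)) * ∑ i ∈ Finset.Icc 1 T, ∑ v ∈ B i, r i v ≤ 1 := by
    rw [htel, hf0]; linarith
  have hK : 0 < 2*α/(1+α) := by positivity
  set S := ∑ i ∈ Finset.Icc 1 T, ∑ v ∈ B i, (G.degree v : ℝ) with hS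
  have hRS : (2*α/(1+α)) * (ε * S) ≤ 1 :=
    le_trans (by nlinarith) hR
  have h1α : (0:ℝ) < 1 + α := by linarith
  rw [div_mul_eq_mul_div, div_le_one h1α] at hRS
  rw [le_div_iff₀ (by positivity)]
  nlinarith
end

section
/- In the deterministic heat kernel PageRank (HK-PR) process, the residual vectors are entrywise nonnegative; the total residual mass at each level satisfies Σ_{w∈V} r_{j+1}(w) ≤ (t/(j+1))·Σ_{v∈V} r_j(v); and consequently, for every j ≥ 0, Σ_{v∈V} r_j(v) ≤ t^j / j!. -/
/-- **Deterministic heat kernel PageRank (HK-PR): residual mass bounds.**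
With `r 0 = 𝟙_x` and, for an arbitrary sequence of push sets `A j ⊆ V`,
`r (j+1) w = Σ_{v ∈ A j, {v,w} ∈ E} t·r j v / ((j+1)·d v)`, the residuals are
entrywise nonnegative; `Σ_w r (j+1) w ≤ (t/(j+1))·Σ_v r j v` for every `j`;
and consequently `Σ_v r j v ≤ t^j / j!` for every `j ≥ 0`. -/
theorem hk_pr_residual_mass_bounds
    {V : Type*} [Fintype V] [DecidableEq V] (G : SimpleGraph V) [DecidableRel G.Adj]
    (hd : ∀ v : V, 0 < G.degree v)
    (t : ℝ) (ht : 0 < t) (x : V)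
    (r : ℕ → V → ℝ) (A : ℕ → Finset V)
    (hinit : ∀ v : V, r 0 v = if v = x then 1 else 0)
    (hrec : ∀ j : ℕ, ∀ w : V,
      r (j + 1) w = ∑ v ∈ A j, if G.Adj v w then
          t * r j v / (((j : ℝ) + 1) * (G.degree v : ℝ)) else 0) :
    (∀ j : ℕ, ∀ v : V, 0 ≤ r j v) ∧
    (∀ j : ℕ, ∑ w, r (j + 1) w ≤ (t / ((j : ℝ) + 1)) * ∑ v, r j v) ∧
    (∀ j : ℕ, ∑ v, r j v ≤ t ^ j / (Nat.factorial j : ℝ)) := by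
  have hnn : ∀ j : ℕ, ∀ v : V, 0 ≤ r j v := by
    intro j
    induction j with
    | zero => intro v; rw [hinit]; split <;> norm_num
    | succ j ih =>
      intro w
      rw [hrec]
      apply Finset.sum_nonneg
      intro v _
      split
      · apply div_nonneg (mul_nonneg ht.le (ih v)); positivity
      · exact le_refl 0
  have key : ∀ v : V, ∀ c : ℝ, ∑ w, (if G.Adj v w then c else 0) = (G.degree v : ℝ) * c := by
    intro v c
    rw [← Finset.sum_filter]
    have h : Finset.univ.filter (G.Adj v) = G.neighborFinset v := by
      ext w; simp [SimpleGraph.mem_neighborFinset]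
    rw [h, Finset.sum_const, SimpleGraph.card_neighborFinset_eq_degree,
      nsmul_eq_mul]
  have hmass : ∀ j : ℕ, ∑ w, r (j + 1) w ≤ (t / ((j : ℝ) + 1)) * ∑ v, r j v := by
    intro j
    have h1 : ∑ w, r (j + 1) w = ∑ v ∈ A j, (t / ((j : ℝ) + 1)) * r j v := by
      simp_rw [hrec]
      rw [Finset.sum_comm]
      apply Finset.sum_congr rfl
      intro v _
      rw [key]
      have hdv : (G.degree v : ℝ) ≠ 0 := (Nat.cast_pos.mpr (hd v)).ne'
      have hj : ((j : ℝ) + 1) ≠ 0 := by positivity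
      field_simp
    rw [h1, Finset.mul_sum]
    apply Finset.sum_le_sum_of_subset_of_nonneg (Finset.subset_univ _)
    intro v _ _
    exact mul_nonneg (div_nonneg ht.le (by positivity)) (hnn j v)
  refine ⟨hnn, hmass, ?_⟩
  intro j
  induction j with
  | zero =>
    simp only [pow_zero, Nat.factorial_zero, Nat.cast_one]
    rw [Finset.sum_congr rfl (fun v _ => hinit v)]
    simp
  | succ j ih =>
    calc ∑ v, r (j + 1) v ≤ (t / ((j : ℝ) + 1)) * ∑ v, r j v := hmass j
      _ ≤ (t / ((j : ℝ) + 1)) * (t ^ j / (Nat.factorial j : ℝ)) := by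
          apply mul_le_mul_of_nonneg_left ih
          exact div_nonneg ht.le (by positivity)
      _ = t ^ (j + 1) / (Nat.factorial (j + 1) : ℝ) := by
          rw [Nat.factorial_succ]
          push_cast
          have h1 : ((j : ℝ) + 1) ≠ 0 := by positivity
          have h2 : (Nat.factorial j : ℝ) ≠ 0 := by positivity
          field_simp
          ring
end
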